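/- Let w = ∑_{β∈B} a_β e_{−β} ∈ r₋ with all coefficients a_β nonzero, where B is the cascade of orthogonal roots. If 0 ≠ x ∈ r = span{e_β : β ∈ B}, then the h-component Φ_h([x,w]) of the bracket [x,w] is nonzero. -/

import Mathlib

private lemma aux_sum_lie {g : Type*} [LieRing g] [LieAlgebra ℂ g]
    {ι : Type*} (s : Finset ι) (v : ι → g) (y : g) :
    ⁅∑ i ∈ s, v i, y⁆ = ∑ i ∈ s, ⁅v i, y⁆ := by
  classical
  induction s using Finset.induction_on with
  | empty => simp
  | insert _ _ h ih => rw [Finset.sum_insert h, add_lie, ih, Finset.sum_insert h]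

private lemma aux_lie_sum {g : Type*} [LieRing g] [LieAlgebra ℂ g]
    {ι : Type*} (s : Finset ι) (x : g) (v : ι → g) :
    ⁅x, ∑ i ∈ s, v i⁆ = ∑ i ∈ s, ⁅x, v i⁆ := by
  classical
  induction s using Finset.induction_on with
  | empty => simp
  | insert _ _ h ih => rw [Finset.sum_insert h, lie_add, ih, Finset.sum_insert h]

/-- Let `g = n₋ + h + n` be a triangular decomposition of a complex
semisimple Lie algebra, `Φh : g → h ⊆ g` the projection onto `h` along `n₋ + n`, and let
`B` (indexed by a finite type `ι`) be the cascade of (strongly) orthogonal roots, with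
root vectors `e i ∈ g_{β i}`, `f i ∈ g_{-β i}` normalized so that `Φh ⁅e i, f i⁆` is the
Killing-form coroot `hβ i` of `β i`; strong orthogonality gives `⁅e i, f j⁆ = 0` for
`i ≠ j`, and the coroots `hβ i` are linearly independent in `h`.
Let `w = ∑ a i • f i ∈ r₋` with all coefficients `a i` nonzero.
If `0 ≠ x = ∑ c i • e i ∈ r = span{e i}`, then `Φh ⁅x, w⁆ ≠ 0`. -/
theorem h_component_of_bracket_ne_zero
    {g : Type*} [LieRing g] [LieAlgebra ℂ g]
    (Φh : g →ₗ[ℂ] g)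
    {ι : Type*} [Fintype ι]
    (e f hβ : ι → g)
    (hcoroot : ∀ i, Φh ⁅e i, f i⁆ = hβ i)
    (horth : ∀ i j, i ≠ j → ⁅e i, f j⁆ = 0)
    (hindep : LinearIndependent ℂ hβ)
    (a : ι → ℂ) (ha : ∀ i, a i ≠ 0)
    (c : ι → ℂ)
    (x : g) (hx : x = ∑ i, c i • e i) (hxne : x ≠ 0)
    (w : g) (hw : w = ∑ i, a i • f i) :
    Φh ⁅x, w⁆ ≠ 0 := by
  classical
  have key : Φh ⁅x, w⁆ = ∑ i, (c i * a i) • hβ i := by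
    subst hx hw
    rw [aux_sum_lie]
    rw [map_sum]
    refine Finset.sum_congr rfl fun i _ => ?_
    rw [smul_lie, aux_lie_sum, map_smul, map_sum]
    have step : ∀ j ∈ Finset.univ, Φh ⁅e i, a j • f j⁆
        = if j = i then a i • hβ i else 0 := by
      intro j _
      by_cases h : j = i
      · simp [h, lie_smul, hcoroot i]
      · simp [lie_smul, horth i j (Ne.symm h), h]
    rw [Finset.sum_congr rfl step, Finset.sum_ite_eq' Finset.univ i]
    simp [mul_smul]
  rw [key]
  intro hzero
  apply hxne
  rw [hx]
  have hall := (Fintype.linearIndependent_iff.mp hindep) (fun i => c i * a i) hzero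
  refine Finset.sum_eq_zero fun i _ => ?_
  have hci : c i = 0 := by
    rcases mul_eq_zero.mp (hall i) with h | h
    · exact h
    · exact absurd h (ha i)
  simp [hci]
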